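/- arXiv:1608.08843 — 4 statements merged into one kernel-verified Lean document; each statement's English description precedes it below -/
import Mathlib

section
/- The poset P on points a_1,…,a_n, b_1,…,b_n, c_0,…,c_n (n ≥ 2) generated by the relations c_0 < … < c_n, a_i < c_i and c_{i−1} < b_i for 1 ≤ i ≤ n, and a_i < b_j for 1 ≤ j < i ≤ n, excludes 3+3: every chain of size at least 3 in P contains a point of the form c_i, hence P contains no two incomparable 3-element chains. -/
variable {α : Type*}

/-- A linear extension of a partial order, given as a binary relation. -/
def IsLinExt [PartialOrder α] (r : α → α → Prop) : Prop :=
  IsLinearOrder α r ∧ ∀ x y : α, x ≤ y → r x y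

/-- A realizer: a family of linear extensions whose intersection is the order. -/
def IsRealizer [PartialOrder α] {d : ℕ} (L : Fin d → α → α → Prop) : Prop :=
  (∀ i, IsLinExt (L i)) ∧ ∀ x y : α, x ≤ y ↔ ∀ i, L i x y

/-- The order dimension of a poset: the least positive `d` admitting a realizer of size `d`. -/
noncomputable def pdim (α : Type*) [PartialOrder α] : ℕ :=
  sInf {d | 0 < d ∧ ∃ L : Fin d → α → α → Prop, IsRealizer L}

/-- The set of (ordered) incomparable pairs of a poset. -/
def IncPairs (α : Type*) [PartialOrder α] : Set (α × α) :=
  {p | ¬ p.1 ≤ p.2 ∧ ¬ p.2 ≤ p.1}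

/-- `r` reverses every pair `(x, y)` in `S`, i.e. `x > y` in `r`. -/
def Reverses [PartialOrder α] (r : α → α → Prop) (S : Set (α × α)) : Prop :=
  ∀ p ∈ S, r p.2 p.1 ∧ ¬ r p.1 p.2

/-- A set of incomparable pairs is reversible if some linear extension reverses all of them. -/
def Reversible [PartialOrder α] (S : Set (α × α)) : Prop :=
  ∃ r, IsLinExt r ∧ Reverses r S

/-- `d` linear extensions suffice to reverse every pair of `S` (i.e. `dim S ≤ d`). -/
def RealizerOn [PartialOrder α] (d : ℕ) (S : Set (α × α)) : Prop :=
  ∃ L : Fin d → α → α → Prop, (∀ i, IsLinExt (L i)) ∧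
    ∀ p ∈ S, ∃ i, L i p.2 p.1 ∧ ¬ L i p.1 p.2

/-- The height of a subset of a poset: the maximum size of a chain contained in it. -/
noncomputable def heightSet [PartialOrder α] (S : Set α) : ℕ :=
  sSup {n | ∃ t : Finset α, ↑t ⊆ S ∧ IsChain (· ≤ ·) (↑t : Set α) ∧ t.card = n}

/-- The height of a poset: the maximum size of a chain. -/
noncomputable def pheight (α : Type*) [PartialOrder α] : ℕ :=
  heightSet (Set.univ : Set α)

/-- The poset `k + k`: the disjoint sum of two `k`-element chains. -/
def TwoChains (k : ℕ) : Type := Fin k ⊕ Fin k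

def TwoChains.le {k : ℕ} : TwoChains k → TwoChains k → Prop
  | .inl i, .inl j => i.1 ≤ j.1
  | .inr i, .inr j => i.1 ≤ j.1
  | _, _ => False

theorem TwoChains.le_refl' {k : ℕ} (x : TwoChains k) : TwoChains.le x x := by
  cases x <;> simp [TwoChains.le]

theorem TwoChains.le_trans' {k : ℕ} (x y z : TwoChains k)
    (hxy : TwoChains.le x y) (hyz : TwoChains.le y z) : TwoChains.le x z := by
  cases x <;> cases y <;> cases z <;> simp_all [TwoChains.le] <;> omega

theorem TwoChains.le_antisymm' {k : ℕ} (x y : TwoChains k)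
    (hxy : TwoChains.le x y) (hyx : TwoChains.le y x) : x = y := by
  cases x <;> cases y <;> simp_all [TwoChains.le] <;>
    exact congrArg _ (le_antisymm hxy hyx)

instance (k : ℕ) : PartialOrder (TwoChains k) where
  le := TwoChains.le
  le_refl := TwoChains.le_refl'
  le_trans := TwoChains.le_trans'
  le_antisymm := TwoChains.le_antisymm'

/-- The Kelly-like poset on `a_1, …, a_n, b_1, …, b_n, c_0, …, c_n`
(here `KP.a i` is `a_{i+1}`, `KP.b i` is `b_{i+1}`, `KP.c i` is `c_i`). -/
inductive KP (n : ℕ) : Type where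
  | a : Fin n → KP n
  | b : Fin n → KP n
  | c : Fin (n + 1) → KP n

/-- The order generated by `c_0 < ⋯ < c_n`, `a_i < c_i`, `c_{i-1} < b_i` (`1 ≤ i ≤ n`),
and `a_i < b_j` (`1 ≤ j < i ≤ n`), written out explicitly (its transitive closure). -/
def KP.le {n : ℕ} : KP n → KP n → Prop
  | .a i, .a j => i = j
  | .b i, .b j => i = j
  | .c i, .c j => i.1 ≤ j.1
  | .a i, .c j => i.1 + 1 ≤ j.1
  | .a i, .b j => i ≠ j
  | .c i, .b j => i.1 ≤ j.1
  | _, _ => False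

theorem KP.le_refl' {n : ℕ} (x : KP n) : KP.le x x := by
  cases x <;> simp [KP.le]

theorem KP.le_trans' {n : ℕ} (x y z : KP n)
    (hxy : KP.le x y) (hyz : KP.le y z) : KP.le x z := by
  cases x <;> cases y <;> cases z <;>
    simp_all only [KP.le, ne_eq, Fin.ext_iff] <;> first | omega | exact not_false

theorem KP.le_antisymm' {n : ℕ} (x y : KP n)
    (hxy : KP.le x y) (hyx : KP.le y x) : x = y := by
  cases x <;> cases y <;> simp_all only [KP.le, ne_eq, Fin.ext_iff] <;>
    first | omega | exact congrArg _ (Fin.ext (by omega))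

instance (n : ℕ) : PartialOrder (KP n) where
  le := KP.le
  le_refl := KP.le_refl'
  le_trans := KP.le_trans'
  le_antisymm := KP.le_antisymm'


lemma kp_le_def {n : ℕ} (x y : KP n) : x ≤ y ↔ KP.le x y := Iff.rfl

lemma kp_chain_has_c (n : ℕ) (t : Finset (KP n))
    (hchain : IsChain (· ≤ ·) (↑t : Set (KP n))) (hcard : 3 ≤ t.card) :
    ∃ i, KP.c i ∈ t := by
  classical
  by_contra hc
  push_neg at hc
  have hinj : Set.InjOn (fun x : KP n => match x with | .a _ => false | _ => true)
      (↑t : Set (KP n)) := by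
    intro x hx y hy hxy
    by_contra hne
    rcases hchain hx hy hne with h | h <;>
      · rw [kp_le_def] at h
        cases x <;> cases y <;> simp_all [KP.le] <;>
          first
          | exact hne (congrArg _ h)
          | exact hc _ (by assumption)
  have h2 : t.card ≤ 2 := by
    calc t.card = (t.image (fun x : KP n =>
        match x with | .a _ => false | _ => true)).card :=
          (Finset.card_image_of_injOn hinj).symm
      _ ≤ Fintype.card Bool := Finset.card_le_univ _
      _ = 2 := by simp
  omega

/-- Every chain of size at least 3 in `KP n` contains a point `c_i`, and hence `KP n`
excludes `3 + 3`. -/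
theorem kp_excludes_three_plus_three (n : ℕ) (hn : 2 ≤ n) :
    (∀ t : Finset (KP n), IsChain (· ≤ ·) (↑t : Set (KP n)) → 3 ≤ t.card →
      ∃ i, KP.c i ∈ t) ∧
    ¬ Nonempty (TwoChains 3 ↪o KP n) := by
  classical
  refine ⟨fun t h1 h2 => kp_chain_has_c n t h1 h2, ?_⟩
  rintro ⟨f⟩
  have tc_le : ∀ x y : TwoChains 3, x ≤ y ↔ TwoChains.le x y := fun _ _ => Iff.rfl
  -- build the two image chains
  have mkchain : ∀ g : Fin 3 → TwoChains 3,
      (∀ i j : Fin 3, i ≤ j → g i ≤ g j) → (∀ i j : Fin 3, g i = g j → i = j) →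
      ∃ k, ∃ m : Fin 3, KP.c k = f (g m) := by
    intro g hmono hginj
    set t : Finset (KP n) := {f (g 0), f (g 1), f (g 2)} with ht
    have hmem : ∀ x ∈ t, ∃ m : Fin 3, x = f (g m) := by
      intro x hx
      simp only [ht, Finset.mem_insert, Finset.mem_singleton] at hx
      rcases hx with h | h | h
      exacts [⟨0, h⟩, ⟨1, h⟩, ⟨2, h⟩]
    have hchain : IsChain (· ≤ ·) (↑t : Set (KP n)) := by
      intro x hx y hy hne
      obtain ⟨mx, rfl⟩ := hmem x hx
      obtain ⟨my, rfl⟩ := hmem y hy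
      rcases le_total mx my with h | h
      · exact Or.inl (f.monotone (hmono _ _ h))
      · exact Or.inr (f.monotone (hmono _ _ h))
    have hcard : 3 ≤ t.card := by
      have hne : ∀ i j : Fin 3, i ≠ j → f (g i) ≠ f (g j) := by
        intro i j hij h
        exact hij (hginj _ _ (f.injective h))
      rw [ht]
      rw [Finset.card_insert_of_notMem (by
            simp only [Finset.mem_insert, Finset.mem_singleton]
            push_neg
            exact ⟨hne 0 1 (by decide), hne 0 2 (by decide)⟩),
          Finset.card_insert_of_notMem (by
            simp only [Finset.mem_singleton]
            exact hne 1 2 (by decide))]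
      simp
    obtain ⟨k, hk⟩ := kp_chain_has_c n t hchain hcard
    obtain ⟨m, hm⟩ := hmem _ hk
    exact ⟨k, m, hm⟩
  obtain ⟨kL, mL, hL⟩ := mkchain (fun i => .inl i)
    (fun i j h => by exact (tc_le _ _).2 h) (fun i j h => by injection h)
  obtain ⟨kR, mR, hR⟩ := mkchain (fun i => .inr i)
    (fun i j h => by exact (tc_le _ _).2 h) (fun i j h => by injection h)
  have hcomp : (KP.c kL : KP n) ≤ KP.c kR ∨ (KP.c kR : KP n) ≤ KP.c kL := by
    rcases le_total kL.1 kR.1 with h | h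
    · exact Or.inl (by rw [kp_le_def]; exact h)
    · exact Or.inr (by rw [kp_le_def]; exact h)
  rw [hL, hR] at hcomp
  rcases hcomp with h | h
  · exact (by have h' := (tc_le _ _).1 (f.le_iff_le.1 h); exact h' : False)
  · exact (by have h' := (tc_le _ _).1 (f.le_iff_le.1 h); exact h' : False)
end

section
/- Let P be a finite poset, let C = {c_1 < … < c_h} be a maximum chain, and let S be a set of dangerous incomparable pairs of P each satisfying dn(b) > c_1 and up(a) < c_h. Suppose for every i with 1 ≤ i ≤ h−1 there is a coloring φ_i of the incomparable pairs of the convex subposet Ar(i,i+1) with d_1 colors such that each color class is reversible. Let S′ be the set of pairs (a,b) ∈ S that are left-safe with respect to S, meaning there is no b′ ∈ B(S) with a ≤ b′ in P and dn(b′) < dn(b). Then dim(S′) ≤ d_1, i.e., S′ can be reversed by d_1 linear extensions of P. -/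
variable {α : Type*}

/-- Given a chain `c : Fin h → α` (listing `c_1 < ⋯ < c_h`), `dnN c z` is the greatest
1-based index `i` with `c_i ≤ z`, and `0` if there is none. -/
noncomputable def dnN [PartialOrder α] {h : ℕ} (c : Fin h → α) (z : α) : ℕ :=
  {i : Fin h | c i ≤ z}.ncard

/-- `upN c z` is the least 1-based index `j` with `z ≤ c_j`, and `h + 1` if there is none. -/
noncomputable def upN [PartialOrder α] {h : ℕ} (c : Fin h → α) (z : α) : ℕ :=
  h + 1 - {i : Fin h | z ≤ c i}.ncard

/-- A pair `(x, y)` is dangerous when `dn(x) < dn(y) < up(x) < up(y)`. -/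
def Dangerous [PartialOrder α] {h : ℕ} (c : Fin h → α) (p : α × α) : Prop :=
  dnN c p.1 < dnN c p.2 ∧ dnN c p.2 < upN c p.1 ∧ upN c p.1 < upN c p.2

/-- `Dn(i)`: points outside the chain whose down-index is exactly `i`. -/
def Dn [PartialOrder α] {h : ℕ} (c : Fin h → α) (i : ℕ) : Set α :=
  {z | z ∉ Set.range c ∧ dnN c z = i}

/-- `Ar(i, i+1)`: points outside the chain with `dn(z) ≤ i` and `up(z) ≥ i + 1`. -/
def Ar [PartialOrder α] {h : ℕ} (c : Fin h → α) (i : ℕ) : Set α :=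
  {z | z ∉ Set.range c ∧ dnN c z ≤ i ∧ i + 1 ≤ upN c z}

/-- Reversibility of a set of pairs from a subposet `Q`, via a linear extension of the
induced order on `Q`. -/
def ReversibleOn [PartialOrder α] (Q : Set α) (S : Set (α × α)) : Prop :=
  Reversible {p : ↥Q × ↥Q | ((p.1 : α), (p.2 : α)) ∈ S}

/-- The left-safe pairs of a set `S` of dangerous pairs can be reversed with `d_1`
linear extensions, given colorings of `Inc(Ar(i, i+1))` into `d_1` reversible classes. -/
theorem left_safe_dim_le {α : Type*} [PartialOrder α] [Fintype α]
    (c : Fin (pheight α) → α) (hc : StrictMono c)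
    (d1 : ℕ) (S : Set (α × α)) (hSinc : S ⊆ IncPairs α)
    (hSdang : ∀ p ∈ S, Dangerous c p ∧ 1 < dnN c p.2 ∧ upN c p.1 < pheight α)
    (φ : ℕ → α × α → Fin d1)
    (hφ : ∀ i, 1 ≤ i → i ≤ pheight α - 1 → ∀ γ : Fin d1,
      ReversibleOn (Ar c i)
        {p | p ∈ IncPairs α ∧ p.1 ∈ Ar c i ∧ p.2 ∈ Ar c i ∧ φ i p = γ}) :
    RealizerOn d1
      {p ∈ S | ∀ b' ∈ Prod.snd '' S, p.1 ≤ b' → ¬ dnN c b' < dnN c p.2} := by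
  classical
  -- chain index computations
  have hdn_chain : ∀ j : Fin (pheight α), dnN c (c j) = (j : ℕ) + 1 := by
    intro j
    have he : {i : Fin (pheight α) | c i ≤ c j} = ↑(Finset.Iic j) := by
      ext i; simp [hc.le_iff_le]
    rw [dnN, he, Set.ncard_coe_finset, Fin.card_Iic]
  have hup_chain : ∀ j : Fin (pheight α), upN c (c j) = (j : ℕ) + 1 := by
    intro j
    have he : {i : Fin (pheight α) | c j ≤ c i} = ↑(Finset.Ici j) := by
      ext i; simp [hc.le_iff_le]
    have hj := j.isLt
    rw [upN, he, Set.ncard_coe_finset, Fin.card_Ici]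
    omega
  -- membership of dangerous pairs in the region Ar(i, i+1), i = dn(b)
  have hmem : ∀ p ∈ S, p.1 ∈ Ar c (dnN c p.2) ∧ p.2 ∈ Ar c (dnN c p.2) ∧
      1 ≤ dnN c p.2 ∧ dnN c p.2 ≤ pheight α - 1 := by
    intro p hp
    obtain ⟨⟨hd1, hd2, hd3⟩, hb1, ha2⟩ := hSdang p hp
    have hp1nc : p.1 ∉ Set.range c := by
      rintro ⟨j, hj⟩
      have e1 := hdn_chain j; have e2 := hup_chain j
      rw [hj] at e1 e2; omega
    have hp2nc : p.2 ∉ Set.range c := by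
      rintro ⟨j, hj⟩
      have e1 := hdn_chain j; have e2 := hup_chain j
      rw [hj] at e1 e2; omega
    exact ⟨⟨hp1nc, le_of_lt hd1, by omega⟩, ⟨hp2nc, le_refl _, by omega⟩, by omega, by omega⟩
  -- the per-colour construction
  have key : ∀ γ : Fin d1, ∃ s : α → α → Prop, IsLinExt s ∧
      ∀ p ∈ {p ∈ S | ∀ b' ∈ Prod.snd '' S, p.1 ≤ b' → ¬ dnN c b' < dnN c p.2},
        φ (dnN c p.2) p = γ → s p.2 p.1 ∧ ¬ s p.1 p.2 := by
    intro γ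
    set T : Set (α × α) := {p | p ∈ S ∧
      (∀ b' ∈ Prod.snd '' S, p.1 ≤ b' → ¬ dnN c b' < dnN c p.2) ∧
      φ (dnN c p.2) p = γ} with hT
    set R : α → α → Prop := fun x y => x < y ∨ (y, x) ∈ T with hR
    set Step : α × α → α × α → Prop := fun p q => p ∈ T ∧ q ∈ T ∧ p.1 ≤ q.2 with hStep
    set m : α × α → ℕ := fun p => dnN c p.2 with hm
    -- left-safety: the down-index is monotone along Step
    have factA : ∀ p q, Step p q → m p ≤ m q := by
      rintro p q ⟨hp, hq, hle⟩
      by_contra hlt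
      exact hp.2.1 q.2 ⟨q, hq.1, rfl⟩ hle (Nat.lt_of_not_le hlt)
    have factM : ∀ p q, Relation.TransGen Step p q → m p ≤ m q := by
      intro p q hpq
      induction hpq with
      | single h => exact factA _ _ h
      | tail _ h ih => exact le_trans ih (factA _ _ h)
    have fact2 : ∀ (i : ℕ) p q, Relation.TransGen Step p q → m p = i → m q = i →
        Relation.TransGen (fun a b => Step a b ∧ m a = i ∧ m b = i) p q := by
      intro i p q hpq
      induction hpq with
      | single h => intro h1 h2; exact .single ⟨h, h1, h2⟩
      | @tail b c' hab hbc ih =>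
        intro h1 h2
        have hb1 : m p ≤ m b := factM _ _ hab
        have hb2 : m b ≤ m c' := factA _ _ hbc
        have hbi : m b = i := by omega
        exact .tail (ih h1 hbi) ⟨hbc, hbi, h2⟩
    -- no cycle at the level of pairs
    have noStepCycle : ∀ q, ¬ Relation.TransGen Step q q := by
      intro q hcyc
      have hqT : q ∈ T := by
        cases hcyc with
        | single h => exact h.1
        | tail _ h => exact h.2.1
      obtain ⟨hq1m, hq2m, hi1, hi2⟩ := hmem q hqT.1
      set i : ℕ := m q with hi
      have h' : ∃ r : ↥(Ar c i) → ↥(Ar c i) → Prop, IsLinExt r ∧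
          Reverses r {p : ↥(Ar c i) × ↥(Ar c i) | ((p.1 : α), (p.2 : α)) ∈
            {p | p ∈ IncPairs α ∧ p.1 ∈ Ar c i ∧ p.2 ∈ Ar c i ∧ φ i p = γ}} :=
        hφ i hi1 hi2 γ
      obtain ⟨r, hrlin, hrrev⟩ := h'
      haveI := hrlin.1
      -- each colour-γ pair with m = i is strictly reversed by r
      have hrev : ∀ p, p ∈ T → m p = i → ∀ (h1 : p.1 ∈ Ar c i) (h2 : p.2 ∈ Ar c i),
          r ⟨p.2, h2⟩ ⟨p.1, h1⟩ ∧ ¬ r ⟨p.1, h1⟩ ⟨p.2, h2⟩ := by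
        intro p hp hpi h1 h2
        refine hrrev (⟨p.1, h1⟩, ⟨p.2, h2⟩) ?_
        have hcol : φ i p = γ := by rw [← hpi]; exact hp.2.2
        exact ⟨hSinc hp.1, h1, h2, hcol⟩
      have hstep2 : ∀ p p', Relation.TransGen (fun a b => Step a b ∧ m a = i ∧ m b = i) p p' →
          ∀ (h2 : p.2 ∈ Ar c i) (h2' : p'.2 ∈ Ar c i),
          r ⟨p.2, h2⟩ ⟨p'.2, h2'⟩ ∧ ¬ r ⟨p'.2, h2'⟩ ⟨p.2, h2⟩ := by
        intro p p' hpp'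
        induction hpp' with
        | @single b hs =>
          intro h2 h2'
          obtain ⟨⟨hpT, hbT, hle⟩, hpi, hbi⟩ := hs
          have h1 : p.1 ∈ Ar c i := by
            have hpi' : dnN c p.2 = i := hpi
            have := (hmem p hpT.1).1; rwa [hpi'] at this
          obtain ⟨hba, hnab⟩ := hrev p hpT hpi h1 h2
          have hlink : r ⟨p.1, h1⟩ ⟨b.2, h2'⟩ :=
            hrlin.2 _ _ (Subtype.mk_le_mk.2 hle)
          refine ⟨IsTrans.trans _ _ _ hba hlink, fun hcon => hnab ?_⟩
          exact IsTrans.trans _ _ _ hlink hcon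
        | @tail b c' hab hbc ih =>
          intro h2 h2'
          obtain ⟨⟨hbT, hcT, hle⟩, hbi, hci⟩ := hbc
          have hb2 : b.2 ∈ Ar c i := by
            have hbi' : dnN c b.2 = i := hbi
            have := (hmem b hbT.1).2.1; rwa [hbi'] at this
          obtain ⟨hr1, hn1⟩ := ih h2 hb2
          have hb1 : b.1 ∈ Ar c i := by
            have hbi' : dnN c b.2 = i := hbi
            have := (hmem b hbT.1).1; rwa [hbi'] at this
          obtain ⟨hba, hnab⟩ := hrev b hbT hbi hb1 hb2
          have hlink : r ⟨b.1, hb1⟩ ⟨c'.2, h2'⟩ :=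
            hrlin.2 _ _ (Subtype.mk_le_mk.2 hle)
          have hr2 : r ⟨b.2, hb2⟩ ⟨c'.2, h2'⟩ := IsTrans.trans _ _ _ hba hlink
          refine ⟨IsTrans.trans _ _ _ hr1 hr2, fun hcon => hn1 ?_⟩
          exact IsTrans.trans _ _ _ hr2 hcon
      have hcyc2 := fact2 i q q hcyc rfl rfl
      obtain ⟨_, hn⟩ := hstep2 q q hcyc2 hq2m hq2m
      exact hn (Std.Refl.refl _)
    -- decompose a TransGen R path
    have decomp : ∀ x y, Relation.TransGen R x y →
        x < y ∨ ∃ p q, p ∈ T ∧ q ∈ T ∧ x ≤ q.2 ∧ Relation.ReflTransGen Step q p ∧ p.1 ≤ y := by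
      intro x y hxy
      induction hxy with
      | @single b hs =>
        rcases hs with hlt | hT'
        · exact Or.inl hlt
        · exact Or.inr ⟨(b, x), (b, x), hT', hT', le_rfl, .refl, le_rfl⟩
      | @tail b c' hab hbc ih =>
        rcases hbc with hlt | hT'
        · rcases ih with h | ⟨p, q, hpT, hqT, hx, hrt, hpb⟩
          · exact Or.inl (lt_trans h hlt)
          · exact Or.inr ⟨p, q, hpT, hqT, hx, hrt, le_trans hpb (le_of_lt hlt)⟩
        · rcases ih with h | ⟨p, q, hpT, hqT, hx, hrt, hpb⟩
          · exact Or.inr ⟨(c', b), (c', b), hT', hT', le_of_lt h, .refl, le_rfl⟩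
          · exact Or.inr ⟨(c', b), q, hT', hqT, hx, hrt.tail ⟨hpT, hT', hpb⟩, le_rfl⟩
    have hirr : ∀ x, ¬ Relation.TransGen R x x := by
      intro x hx
      rcases decomp x x hx with hlt | ⟨p, q, hpT, hqT, hxq, hrt, hpx⟩
      · exact lt_irrefl x hlt
      · exact noStepCycle q (Relation.TransGen.tail' hrt ⟨hpT, hqT, le_trans hpx hxq⟩)
    -- extend to a linear order
    set r₀ : α → α → Prop := fun x y => x = y ∨ Relation.TransGen R x y with hr₀
    haveI : IsPartialOrder α r₀ :=
      { refl := fun x => Or.inl rfl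
        trans := by
          rintro a b cc (rfl | hab) (rfl | hbc)
          · exact Or.inl rfl
          · exact Or.inr hbc
          · exact Or.inr hab
          · exact Or.inr (hab.trans hbc)
        antisymm := by
          intro a b h1 h2
          rcases h1 with rfl | hab
          · rfl
          · rcases h2 with rfl | hba
            · rfl
            · exact absurd (hab.trans hba) (hirr a) }
    obtain ⟨s, hslin, hsle⟩ := extend_partialOrder r₀
    haveI := hslin
    have hsext : ∀ x y : α, x ≤ y → s x y := by
      intro x y hxy
      rcases lt_or_eq_of_le hxy with h | h
      · exact hsle _ _ (Or.inr (.single (Or.inl h)))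
      · exact hsle _ _ (Or.inl h)
    refine ⟨s, ⟨hslin, hsext⟩, ?_⟩
    rintro p ⟨hpS, hpsafe⟩ hcol
    have hpT : p ∈ T := ⟨hpS, hpsafe, hcol⟩
    have hs1 : s p.2 p.1 := hsle _ _ (Or.inr (.single (Or.inr hpT)))
    refine ⟨hs1, fun hcon => ?_⟩
    have heq : p.1 = p.2 := Std.Antisymm.antisymm _ _ hcon hs1
    have := (hSinc hpS).1
    rw [heq] at this
    exact this le_rfl
  choose L hL using key
  exact ⟨L, fun γ => (hL γ).1,
    fun p hp => ⟨φ (dnN c p.2) p, (hL (φ (dnN c p.2) p)).2 p hp rfl⟩⟩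
end

section
/- Let P be a finite poset whose cover graph has a fixed plane drawing, and let C be a chain of P containing, for each comparable pair (x,y) with x ≤ y, all elements of C between x and y. Then there is a function assigning to each pair (x,y) with x ≤ y in P a witnessing path W(x,y) in the cover graph (a path x = u_0 < u_1 < … < u_r = y where each u_{i+1} covers u_i) such that: (1) if x ≤ c ≤ y in P and c ∈ C, then W(x,y) passes through c; and (2) if x_1 ≤ x_2 ≤ y_2 ≤ y_1 in P and W(x_1,y_1) passes through both x_2 and y_2, then W(x_2,y_2) equals the subpath of W(x_1,y_1) from x_2 to y_2. -/
variable {α : Type*}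

/-- A witnessing path for `x ≤ y`: a nonempty list starting at `x`, ending at `y`,
each element covered by the next. -/
def IsWitnessPath [PartialOrder α] (x y : α) (l : List α) : Prop :=
  l ≠ [] ∧ l.head? = some x ∧ l.getLast? = some y ∧ l.Chain' (· ⋖ ·)

open List

namespace CWP

theorem lex_append_left {β : Type*} {r : β → β → Prop} {l₁ l₂ : List β}
    (h : List.Lex r l₁ l₂) (c : List β) : List.Lex r (c ++ l₁) (c ++ l₂) := by
  induction c with
  | nil => simpa
  | cons a c ih => exact List.Lex.cons ih

theorem lex_append_of_not_prefix {β : Type*} {r : β → β → Prop} {l₁ l₂ : List β}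
    (h : List.Lex r l₁ l₂) :
    ¬ l₁ <+: l₂ → ∀ t t' : List β, List.Lex r (l₁ ++ t) (l₂ ++ t') := by
  induction h with
  | nil => exact fun hnp => absurd List.nil_prefix hnp
  | @rel a l₁ b l₂ hab => exact fun _ t t' => List.Lex.rel hab
  | @cons a l₁ l₂ h ih =>
      exact fun hnp t t' =>
        List.Lex.cons (ih (fun hp => hnp (List.cons_prefix_cons.mpr ⟨rfl, hp⟩)) t t')

variable {α : Type*} [PartialOrder α]

theorem mem_of_head?' {l : List α} {a : α} (h : l.head? = some a) : a ∈ l :=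
  List.mem_of_mem_head? (by rw [h]; rfl)

theorem mem_of_getLast?' {l : List α} {a : α} (h : l.getLast? = some a) : a ∈ l :=
  List.mem_of_mem_getLast? (by rw [h]; rfl)

theorem getLast?_cons_of_ne_nil' {a : α} {l : List α} (h : l ≠ []) :
    (a :: l).getLast? = l.getLast? := by
  cases l with
  | nil => exact absurd rfl h
  | cons b t => rw [List.getLast?_cons_cons]

theorem witness_append {x m y : α} {p q : List α} (hp : IsWitnessPath x m p)
    (hq : IsWitnessPath m y q) : IsWitnessPath x y (p ++ q.tail) := by
  obtain ⟨hp0, hph, hpl, hpc⟩ := hp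
  obtain ⟨hq0, hqh, hql, hqc⟩ := hq
  cases q with
  | nil => exact absurd rfl hq0
  | cons a qt =>
    obtain rfl : a = m := by simpa using hqh
    refine ⟨by simp [hp0], by rwa [head?_append_of_ne_nil _ hp0], ?_, ?_⟩
    · rcases qt with _ | ⟨b, qt⟩
      · simpa using hpl.trans (by simpa using hql)
      · rw [tail_cons, List.getLast?_append]
        rw [List.getLast?_cons_cons] at hql
        simp [hql]
    · unfold List.Chain' at hpc hqc ⊢; rw [List.isChain_append]
      refine ⟨hpc, hqc.tail, ?_⟩
      intro u hu v hv
      rw [hpl] at hu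
      obtain rfl : a = u := by simpa using hu
      rcases qt with _ | ⟨b, qt⟩
      · simp at hv
      · obtain rfl : b = v := by simpa using hv
        exact hqc.rel_head

theorem exists_witness [Fintype α] : ∀ x y : α, x ≤ y → ∃ l, IsWitnessPath x y l := by
  classical
  have wf : WellFounded ((· > ·) : α → α → Prop) := (Finite.to_wellFoundedGT).wf
  intro x
  induction x using wf.induction with
  | _ x ih =>
    intro y hxy
    rcases eq_or_lt_of_le hxy with rfl | hlt
    · exact ⟨[x], by simp, by simp, by simp, List.isChain_singleton _⟩
    · have hne : (Finset.univ.filter (fun z => x < z ∧ z ≤ y)).Nonempty :=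
        ⟨y, by simp [hlt]⟩
      obtain ⟨z, hz, hzmin⟩ : ∃ z ∈ Finset.univ.filter (fun z => x < z ∧ z ≤ y), ∀ w ∈ Finset.univ.filter (fun z => x < z ∧ z ≤ y), ¬ w < z :=
        let ⟨z, hzm⟩ := Finset.exists_minimal hne; ⟨z, hzm.1, fun w hw hwz => hzm.not_lt hw hwz⟩
      simp only [Finset.mem_filter, Finset.mem_univ, true_and] at hz
      have hcov : x ⋖ z := by
        refine ⟨hz.1, fun w hw hwz => ?_⟩
        exact hzmin w (by simp [hw, hwz.le.trans hz.2]) hwz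
      obtain ⟨l, hl⟩ := ih z hz.1 y hz.2
      refine ⟨x :: l, by simp, by simp, ?_, ?_⟩
      · rw [getLast?_cons_of_ne_nil' hl.1]
        exact hl.2.2.1
      · unfold List.Chain'; rw [List.isChain_cons]
        refine ⟨?_, hl.2.2.2⟩
        intro h hh
        rw [hl.2.1] at hh
        obtain rfl : z = h := by simpa using hh
        exact hcov

theorem exists_valid [Fintype α] {C : Set α} (hC : IsChain (· ≤ ·) C) :
    ∀ x y : α, x ≤ y → ∃ l, IsWitnessPath x y l ∧ ∀ c ∈ C, x ≤ c → c ≤ y → c ∈ l := by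
  classical
  have wf : WellFounded ((· > ·) : α → α → Prop) := (Finite.to_wellFoundedGT).wf
  intro x
  induction x using wf.induction with
  | _ x ih =>
    intro y hxy
    by_cases hS : (Finset.univ.filter (fun c => c ∈ C ∧ x ≤ c ∧ c ≤ y ∧ c ≠ x)).Nonempty
    · obtain ⟨c0, hc0, hc0min⟩ : ∃ z ∈ Finset.univ.filter (fun c => c ∈ C ∧ x ≤ c ∧ c ≤ y ∧ c ≠ x), ∀ w ∈ Finset.univ.filter (fun c => c ∈ C ∧ x ≤ c ∧ c ≤ y ∧ c ≠ x), ¬ w < z :=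
        let ⟨z, hzm⟩ := Finset.exists_minimal hS; ⟨z, hzm.1, fun w hw hwz => hzm.not_lt hw hwz⟩
      simp only [Finset.mem_filter, Finset.mem_univ, true_and] at hc0
      have hleast : ∀ c, c ∈ C → x ≤ c → c ≤ y → c ≠ x → c0 ≤ c := by
        intro c hcC hxc hcy hcx
        by_cases hcc : c = c0
        · exact le_of_eq hcc.symm
        · rcases hC hcC hc0.1 hcc with h | h
          · exact absurd (lt_of_le_of_ne h hcc)
              (hc0min c (by simp [hcC, hxc, hcy, hcx]))
          · exact h
      have hxc0 : x < c0 := lt_of_le_of_ne hc0.2.1 (Ne.symm hc0.2.2.2)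
      obtain ⟨p, hp⟩ := exists_witness x c0 hc0.2.1
      obtain ⟨q, hq, hqmem⟩ := ih c0 hxc0 y hc0.2.2.1
      refine ⟨p ++ q.tail, witness_append hp hq, ?_⟩
      intro c hcC hxc hcy
      by_cases hcx : c = x
      · subst hcx
        exact List.mem_append_left _ (mem_of_head?' hp.2.1)
      · have hc0c := hleast c hcC hxc hcy hcx
        have hcq : c ∈ q := hqmem c hcC hc0c hcy
        cases q with
        | nil => exact absurd rfl hq.1
        | cons a qt =>
          obtain rfl : a = c0 := by simpa using hq.2.1
          rcases List.mem_cons.mp hcq with rfl | h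
          · exact List.mem_append_left _ (mem_of_getLast?' hp.2.2.1)
          · exact List.mem_append_right _ h
    · obtain ⟨p, hp⟩ := exists_witness x y hxy
      refine ⟨p, hp, ?_⟩
      intro c hcC hxc hcy
      have hcx : c = x := by
        by_contra h
        exact hS ⟨c, by simp [hcC, hxc, hcy, h]⟩
      subst hcx
      exact mem_of_head?' hp.2.1

theorem pairwise_of_witness {x y : α} {l : List α} (h : IsWitnessPath x y l) :
    l.Pairwise (· < ·) :=
  List.isChain_iff_pairwise.mp (List.IsChain.imp (fun a b hab => hab.lt) h.2.2.2)

theorem bounds_of_witness {x y : α} {l : List α} (h : IsWitnessPath x y l) :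
    ∀ c ∈ l, x ≤ c ∧ c ≤ y := by
  intro c hc
  have hp := pairwise_of_witness h
  constructor
  · cases l with
    | nil => simp at hc
    | cons a t =>
      obtain rfl : a = x := by simpa using h.2.1
      rcases List.mem_cons.mp hc with rfl | hct
      · exact le_refl _
      · exact le_of_lt ((List.pairwise_cons.mp hp).1 c hct)
  · have h0 := h.1
    have hy : l.getLast h0 = y := by
      have h2 := h.2.2.1
      rw [List.getLast?_eq_getLast h0] at h2
      simpa using h2
    have hdl := List.dropLast_concat_getLast h0
    rw [hy] at hdl
    rw [← hdl] at hp hc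
    rcases List.mem_append.mp hc with hcd | hcy
    · exact le_of_lt ((List.pairwise_append.mp hp).2.2 c hcd y (by simp))
    · simp at hcy; exact le_of_eq hcy

end CWP

open CWP in
/-- There is a consistent choice of witnessing paths: each `W(x, y)` passes through all
chain elements between `x` and `y`, and whenever `x ≤ x₂ ≤ y₂ ≤ y` and `W(x, y)` passes
through `x₂` and `y₂`, the path `W(x₂, y₂)` is the corresponding subpath of `W(x, y)`. -/
theorem exists_consistent_witnessing_paths {α : Type*} [PartialOrder α] [Fintype α]
    (C : Set α) (hC : IsChain (· ≤ ·) C) :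
    ∃ W : α → α → List α,
      ∀ x y : α, x ≤ y →
        IsWitnessPath x y (W x y) ∧
        (∀ c ∈ C, x ≤ c → c ≤ y → c ∈ W x y) ∧
        (∀ x2 y2 : α, x ≤ x2 → x2 ≤ y2 → y2 ≤ y →
          x2 ∈ W x y → y2 ∈ W x y → (W x2 y2).IsInfix (W x y)) := by
  classical
  set e : α ≃ Fin (Fintype.card α) := Fintype.equivFin α with he
  set key : List α → List (Fin (Fintype.card α)) := fun l => l.map e with hkey
  have keyinj : Function.Injective key := List.map_injective_iff.mpr e.injective
  have hmin : ∀ x y : α, x ≤ y → ∃ w : List α,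
      (IsWitnessPath x y w ∧ ∀ c ∈ C, x ≤ c → c ≤ y → c ∈ w) ∧
      ∀ l : List α, (IsWitnessPath x y l ∧ ∀ c ∈ C, x ≤ c → c ≤ y → c ∈ l) →
        key w ≤ key l := by
    intro x y h
    have hfin : {l : List α | IsWitnessPath x y l ∧ ∀ c ∈ C, x ≤ c → c ≤ y → c ∈ l}.Finite := by
      apply Set.Finite.subset (List.finite_length_le α (Fintype.card α))
      intro l hl
      have hnd : l.Nodup := (pairwise_of_witness hl.1).imp fun h => h.ne
      exact hnd.length_le_card
    obtain ⟨l0, hl0⟩ := exists_valid hC x y h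
    have hne : hfin.toFinset.Nonempty := ⟨l0, by rw [Set.Finite.mem_toFinset]; exact hl0⟩
    obtain ⟨w, hw, hwmin⟩ := Finset.exists_min_image hfin.toFinset key hne
    rw [Set.Finite.mem_toFinset] at hw
    exact ⟨w, hw, fun l hl => hwmin l (by rw [Set.Finite.mem_toFinset]; exact hl)⟩
  choose Wf hWf hWmin using hmin
  refine ⟨fun x y => if h : x ≤ y then Wf x y h else [], ?_⟩
  intro x y hxy
  simp only [dif_pos hxy]
  obtain ⟨LW, LC⟩ := hWf x y hxy
  refine ⟨LW, LC, ?_⟩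
  intro x2 y2 hx2 h22 hy2 hx2m hy2m
  simp only [dif_pos h22]
  set L := Wf x y hxy with hLdef
  have PL : L.Pairwise (· < ·) := pairwise_of_witness LW
  have NDL : L.Nodup := PL.imp fun h => h.ne
  obtain ⟨A, B, hAB⟩ := List.append_of_mem hx2m
  have hy2B : y2 ∈ x2 :: B := by
    rcases eq_or_lt_of_le h22 with rfl | hlt
    · exact List.mem_cons_self
    · have hmem := hy2m; rw [hAB] at hmem
      rcases List.mem_append.mp hmem with hA | hB
      · exfalso
        have hpa := PL; rw [hAB] at hpa
        have hlt2 := (List.pairwise_append.mp hpa).2.2 y2 hA x2 List.mem_cons_self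
        exact absurd (hlt.trans hlt2) (lt_irrefl _)
      · exact hB
  obtain ⟨D, T, hDT⟩ := List.append_of_mem hy2B
  set S := D ++ [y2] with hSdef
  have hL2 : L = A ++ S ++ T := by rw [hAB, hDT, hSdef]; simp
  have hSh : S.head? = some x2 := by
    cases D with
    | nil =>
      simp only [List.nil_append] at hDT ⊢
      obtain ⟨rfl, rfl⟩ : x2 = y2 ∧ B = T := by simpa using hDT
      simp [hSdef]
    | cons d D' =>
      have : x2 = d := by simpa using congrArg List.head? hDT
      simp [hSdef, this]
  have hS0 : S ≠ [] := by simp [hSdef]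
  have hSl : S.getLast? = some y2 := by simp [hSdef, List.getLast?_append]
  have hSinf : S <:+: L := ⟨A, T, hL2.symm⟩
  have SW : IsWitnessPath x2 y2 S := ⟨hS0, hSh, hSl, List.IsChain.infix LW.2.2.2 hSinf⟩
  have PL2 : (A ++ (S ++ T)).Pairwise (· < ·) := by
    rw [← List.append_assoc, ← hL2]; exact PL
  obtain ⟨PA, PST, hAST⟩ := List.pairwise_append.mp PL2
  obtain ⟨PS, PT, hST⟩ := List.pairwise_append.mp PST
  have hx2S : x2 ∈ S := mem_of_head?' hSh
  have hy2S : y2 ∈ S := mem_of_getLast?' hSl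
  have SC : ∀ c ∈ C, x2 ≤ c → c ≤ y2 → c ∈ S := by
    intro c hcC hc1 hc2
    have hcL : c ∈ L := LC c hcC (le_trans hx2 hc1) (le_trans hc2 hy2)
    rw [hL2, List.append_assoc] at hcL
    rcases List.mem_append.mp hcL with hA | hST'
    · exact absurd (lt_of_le_of_lt hc1 (hAST c hA x2 (List.mem_append_left _ hx2S)))
        (lt_irrefl _)
    · rcases List.mem_append.mp hST' with h | hT
      · exact h
      · exact absurd (lt_of_le_of_lt hc2 (hST y2 hy2S c hT)) (lt_irrefl _)
  by_cases hWS : Wf x2 y2 h22 = S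
  · rw [hWS]; exact ⟨A, T, hL2.symm⟩
  · exfalso
    obtain ⟨W2W, W2C⟩ := hWf x2 y2 h22
    set W2 := Wf x2 y2 h22 with hW2def
    have hle : key W2 ≤ key S := hWmin x2 y2 h22 S ⟨SW, SC⟩
    have hklt : key W2 < key S := lt_of_le_of_ne hle (fun hk => hWS (keyinj hk))
    have hlex : List.Lex (· < ·) (key W2) (key S) := hklt
    have hW2h : W2.head? = some x2 := W2W.2.1
    have hW2l : W2.getLast? = some y2 := W2W.2.2.1
    have hnp : ¬ key W2 <+: key S := by
      intro hp
      have hpre : W2 <+: S := by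
        have h1 := List.prefix_iff_eq_take.mp hp
        rw [show (key W2).length = W2.length by simp [hkey]] at h1
        have h2 : key W2 = key (S.take W2.length) := by
          rw [h1, hkey]; simp [List.map_take]
        rw [keyinj h2]
        exact List.take_prefix _ _
      obtain ⟨t, ht⟩ := hpre
      have ht0 : t ≠ [] := by rintro rfl; simp at ht; exact hWS ht
      have hyW2 : y2 ∈ W2 := mem_of_getLast?' hW2l
      have hyt : y2 ∈ t := by
        have h3 := hSl; rw [← ht, List.getLast?_append] at h3
        cases htl : t.getLast? with
        | none => exact absurd (List.getLast?_eq_none_iff.mp htl) ht0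
        | some a =>
          rw [htl] at h3
          obtain rfl : a = y2 := by simpa using h3
          exact mem_of_getLast?' htl
      have hndS : S.Nodup := List.Nodup.sublist hSinf.sublist NDL
      rw [← ht] at hndS
      exact (List.nodup_append'.mp hndS).2.2 hyW2 hyt
    set N := A ++ (W2 ++ T) with hNdef
    have hL2' : L = A ++ (S ++ T) := by rw [hL2, List.append_assoc]
    have NW : IsWitnessPath x y N := by
      refine ⟨by simp [hNdef, W2W.1], ?_, ?_, ?_⟩
      · show N.head? = some x
        rw [hNdef, List.head?_append, List.head?_append, hW2h]
        have hh := LW.2.1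
        rw [hL2', List.head?_append, List.head?_append, hSh] at hh
        exact hh
      · show N.getLast? = some y
        rw [hNdef, List.getLast?_append, List.getLast?_append, hW2l]
        have hh := LW.2.2.1
        rw [hL2', List.getLast?_append, List.getLast?_append, hSl] at hh
        exact hh
      · have hcL := LW.2.2.2
        unfold List.Chain' at hcL ⊢; rw [hL2', List.isChain_append, List.isChain_append] at hcL
        rw [hNdef, List.isChain_append, List.isChain_append]
        refine ⟨hcL.1, ⟨W2W.2.2.2, hcL.2.1.2.1, ?_⟩, ?_⟩
        · intro a ha b hb
          rw [hW2l] at ha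
          exact hcL.2.1.2.2 a (by rw [hSl]; exact ha) b hb
        · intro a ha b hb
          refine hcL.2.2 a ha b ?_
          rw [List.head?_append, hW2h] at hb
          rw [List.head?_append, hSh]
          exact hb
    have NC : ∀ c ∈ C, x ≤ c → c ≤ y → c ∈ N := by
      intro c hcC hc1 hc2
      have hcL := LC c hcC hc1 hc2
      rw [hL2'] at hcL
      rw [hNdef]
      rcases List.mem_append.mp hcL with hA | hST'
      · exact List.mem_append_left _ hA
      · rcases List.mem_append.mp hST' with hS | hT
        · obtain ⟨hb1, hb2⟩ := bounds_of_witness SW c hS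
          exact List.mem_append_right _ (List.mem_append_left _ (W2C c hcC hb1 hb2))
        · exact List.mem_append_right _ (List.mem_append_right _ hT)
    have hkeylt : key N < key L := by
      show List.Lex (· < ·) (key N) (key L)
      have h2 := lex_append_of_not_prefix hlex hnp (key T) (key T)
      have h3 := lex_append_left h2 (key A)
      have hN : key N = key A ++ (key W2 ++ key T) := by simp [hkey, hNdef]
      have hL3 : key L = key A ++ (key S ++ key T) := by simp [hkey, hL2']
      rw [hN, hL3]
      exact h3
    have hge := hWmin x y hxy N ⟨NW, NC⟩
    exact absurd (lt_of_le_of_lt hge hkeylt) (lt_irrefl _)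
end

section
/- Let P be a finite poset with maximum chain C = {c_1 < … < c_h}, let S be a set of incomparable pairs (a,b) of P with c_1 < dn(b) and up(a) < c_h, where for a comparable pair (a,b) with a ∈ A(S), b ∈ B(S), a ≤ b, the pair is called strong if up(a) ≤ dn(b) in P and weak otherwise. Then for every strict alternating cycle {(a_α,b_α)}_{α=1}^s in S (s ≥ 2), there is at most one index α such that (a_α, b_{α+1}) is a strong comparable pair. -/
variable {α : Type*}

/-- An alternating cycle `(x_0,y_0), …, (x_{s-1},y_{s-1})` in `S`: `s ≥ 2` and
`x_i ≤ y_{i+1}` cyclically. -/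
def IsAltCycle [PartialOrder α] (S : Set (α × α)) (s : ℕ) (x y : ℕ → α) : Prop :=
  2 ≤ s ∧ (∀ i < s, (x i, y i) ∈ S) ∧ ∀ i < s, x i ≤ y ((i + 1) % s)

/-- A strict alternating cycle: additionally `x_i ≤ y_j` only when `j ≡ i + 1 (mod s)`. -/
def IsStrictAltCycle [PartialOrder α] (S : Set (α × α)) (s : ℕ) (x y : ℕ → α) : Prop :=
  IsAltCycle S s x y ∧ ∀ i < s, ∀ j < s, x i ≤ y j → j = (i + 1) % s

lemma upN_le_dnN_imp_le {α : Type*} [PartialOrder α] {h : ℕ} (c : Fin h → α) {z w : α}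
    (hzw : upN c z ≤ dnN c w) : z ≤ w := by
  classical
  set U : Set (Fin h) := {k | z ≤ c k} with hUdef
  set D : Set (Fin h) := {k | c k ≤ w} with hDdef
  unfold upN dnN at hzw
  have hU' : {i : Fin h | z ≤ c i}.ncard = U.ncard := rfl
  have hD' : {i : Fin h | c i ≤ w}.ncard = D.ncard := rfl
  rw [hU', hD'] at hzw
  have hcard : h + 1 ≤ D.ncard + U.ncard := by omega
  have hunion : (U ∪ D).ncard ≤ h := by
    have := Set.ncard_le_ncard (Set.subset_univ (U ∪ D)) Set.finite_univ
    simpa [Set.ncard_univ] using this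
  have hsum : (U ∪ D).ncard + (U ∩ D).ncard = U.ncard + D.ncard :=
    Set.ncard_union_add_ncard_inter U D
  obtain ⟨k, hk⟩ := Set.nonempty_of_ncard_ne_zero (s := U ∩ D) (by omega)
  exact le_trans hk.1 hk.2

lemma mod_succ_inj {s i j : ℕ} (hi : i < s) (hj : j < s)
    (h : (i + 1) % s = (j + 1) % s) : i = j := by
  rcases Nat.lt_or_ge (i + 1) s with h1 | h1 <;>
    rcases Nat.lt_or_ge (j + 1) s with h2 | h2
  · rw [Nat.mod_eq_of_lt h1, Nat.mod_eq_of_lt h2] at h; omega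
  · have : j + 1 = s := by omega
    rw [Nat.mod_eq_of_lt h1, this, Nat.mod_self] at h; omega
  · have : i + 1 = s := by omega
    rw [Nat.mod_eq_of_lt h2, this, Nat.mod_self] at h; omega
  · omega

/-- In a strict alternating cycle of pairs as in the opposite-side analysis, at most one
link `(a_α, b_{α+1})` is a strong comparable pair (`up(a_α) ≤ dn(b_{α+1})`). -/
theorem at_most_one_strong_link {α : Type*} [PartialOrder α] [Fintype α]
    (c : Fin (pheight α) → α) (hc : StrictMono c)
    (S : Set (α × α)) (hSinc : S ⊆ IncPairs α)
    (hS : ∀ p ∈ S, 1 < dnN c p.2 ∧ upN c p.1 < pheight α)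
    (s : ℕ) (x y : ℕ → α) (hcyc : IsStrictAltCycle S s x y) :
    ∀ i < s, ∀ j < s,
      upN c (x i) ≤ dnN c (y ((i + 1) % s)) →
      upN c (x j) ≤ dnN c (y ((j + 1) % s)) → i = j := by
  obtain ⟨⟨hs2, _, _⟩, hstrict⟩ := hcyc
  have hspos : 0 < s := by omega
  intro i hi j hj hsi hsj
  rcases le_total (upN c (x i)) (upN c (x j)) with hle | hle
  · have hxy : x i ≤ y ((j + 1) % s) := upN_le_dnN_imp_le c (le_trans hle hsj)
    have := hstrict i hi ((j + 1) % s) (Nat.mod_lt _ hspos) hxy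
    exact mod_succ_inj hi hj this.symm
  · have hxy : x j ≤ y ((i + 1) % s) := upN_le_dnN_imp_le c (le_trans hle hsi)
    have := hstrict j hj ((i + 1) % s) (Nat.mod_lt _ hspos) hxy
    exact (mod_succ_inj hj hi this.symm).symm
end
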